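/- For every integer p ≥ 1 and every R > 0, ∫₀^R (r − R)^{p−1} · (√r/(√2·π)) · J₁(2π√(2r)) dr = (p−1)! · (−√R/(√2·π))^{p+1} · J_{p+1}(2π√(2R)). -/

import Mathlib

open Real MeasureTheory

/-- Bessel function of the first kind of nonnegative integer order `ν`. -/
noncomputable def besselJ (ν : ℕ) (x : ℝ) : ℝ :=
  ∑' k : ℕ, (-1 : ℝ) ^ k * (x / 2) ^ (2 * k + ν) /
    ((Nat.factorial k : ℝ) * (Nat.factorial (k + ν) : ℝ))

/-- `G n r = (√r/(√2 π))^n * J_n(2π√(2r))` as a power series in `r`. -/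
noncomputable def besselG' (n : ℕ) (r : ℝ) : ℝ :=
  ∑' k : ℕ, (-1 : ℝ) ^ k * (2 * π ^ 2) ^ k * r ^ (k + n) /
    ((Nat.factorial k : ℝ) * (Nat.factorial (k + n) : ℝ))

lemma besselG'_term_bound (n k : ℕ) (r M : ℝ) (hrM : |r| ≤ M) (hM : 0 ≤ M) :
    ‖(-1 : ℝ) ^ k * (2 * π ^ 2) ^ k * r ^ (k + n) /
      ((Nat.factorial k : ℝ) * (Nat.factorial (k + n) : ℝ))‖ ≤
      (2 * π ^ 2 * M) ^ k / (Nat.factorial k) * M ^ n := by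
  have h2π : (0:ℝ) ≤ 2 * π ^ 2 := by positivity
  have hk1 : (1:ℝ) ≤ (Nat.factorial (k + n) : ℝ) := by
    exact_mod_cast Nat.one_le_iff_ne_zero.mpr (Nat.factorial_ne_zero _)
  have hfk : (0:ℝ) < (Nat.factorial k : ℝ) := by positivity
  have hD : |(Nat.factorial k : ℝ) * (Nat.factorial (k + n) : ℝ)| =
      (Nat.factorial k : ℝ) * (Nat.factorial (k + n) : ℝ) := abs_of_nonneg (by positivity)
  rw [norm_div, norm_mul, norm_mul, norm_pow, norm_pow, norm_pow, norm_neg, norm_one,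
    one_pow, one_mul]
  rw [Real.norm_eq_abs, Real.norm_eq_abs, Real.norm_eq_abs, abs_of_nonneg h2π, hD]
  have habs : |r| ^ (k + n) ≤ M ^ (k + n) := pow_le_pow_left₀ (abs_nonneg r) hrM _
  calc (2 * π ^ 2) ^ k * |r| ^ (k + n) / ((Nat.factorial k : ℝ) * (Nat.factorial (k + n) : ℝ))
      ≤ (2 * π ^ 2) ^ k * M ^ (k + n) / (Nat.factorial k : ℝ) := by
        apply div_le_div₀ (by positivity) (by gcongr) (by positivity)
        nlinarith [hfk]
    _ = (2 * π ^ 2 * M) ^ k / (Nat.factorial k) * M ^ n := by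
        rw [pow_add, mul_pow]; ring

lemma besselG'_summable (n : ℕ) (r : ℝ) :
    Summable (fun k : ℕ => (-1 : ℝ) ^ k * (2 * π ^ 2) ^ k * r ^ (k + n) /
      ((Nat.factorial k : ℝ) * (Nat.factorial (k + n) : ℝ))) := by
  apply Summable.of_norm
  exact Summable.of_nonneg_of_le (fun k => norm_nonneg _)
    (fun k => besselG'_term_bound n k r |r| le_rfl (abs_nonneg r))
    ((Real.summable_pow_div_factorial (2 * π ^ 2 * |r|)).mul_right (|r| ^ n))

lemma besselG'_zero (n : ℕ) : besselG' (n + 1) 0 = 0 := by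
  unfold besselG'
  convert tsum_zero with k
  simp [pow_succ, pow_add]

set_option maxHeartbeats 1000000 in
lemma hasDerivAt_besselG' (n : ℕ) (r : ℝ) :
    HasDerivAt (besselG' (n + 1)) (besselG' n r) r := by
  set M : ℝ := |r| + 1 with hMdef
  have hM : 0 ≤ M := by positivity
  have h0 : (0:ℝ) ∈ Metric.ball (0:ℝ) M := by
    simp [hMdef, Real.dist_eq]; positivity
  have hr : r ∈ Metric.ball (0:ℝ) M := by
    simp [hMdef, Real.dist_eq]
  unfold besselG'
  apply hasDerivAt_tsum_of_isPreconnected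
    (u := fun k : ℕ => (2 * π ^ 2 * M) ^ k / (Nat.factorial k) * M ^ n)
    (g' := fun (k : ℕ) (x : ℝ) => (-1 : ℝ) ^ k * (2 * π ^ 2) ^ k * x ^ (k + n) /
      ((Nat.factorial k : ℝ) * (Nat.factorial (k + n) : ℝ)))
    ((Real.summable_pow_div_factorial (2 * π ^ 2 * M)).mul_right (M ^ n))
    (Metric.isOpen_ball (x := (0:ℝ)) (ε := M))
    ((convex_ball (0:ℝ) M).isPreconnected)
    (fun k y _ => ?_) (fun k y hy => ?_) h0 (besselG'_summable (n+1) 0) hr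
  · have h := (hasDerivAt_pow (k + (n+1)) y).const_mul
      ((-1 : ℝ) ^ k * (2 * π ^ 2) ^ k /
        ((Nat.factorial k : ℝ) * (Nat.factorial (k + (n+1)) : ℝ)))
    convert h using 1
    · ext x; ring
    · ext x; ring
    · have hfac : (Nat.factorial (k + (n+1)) : ℝ) = (k + n + 1) * (Nat.factorial (k + n)) := by
        have h1 : k + (n + 1) = (k + n) + 1 := by ring
        rw [h1, Nat.factorial_succ]; push_cast; ring
      rw [hfac]
      have hfk : (Nat.factorial k : ℝ) ≠ 0 := by positivity
      have hfn : (Nat.factorial (k + n) : ℝ) ≠ 0 := by positivity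
      have h2 : k + (n + 1) - 1 = k + n := by omega
      rw [h2]
      field_simp
      push_cast
      ring
  · have hy' : |y| ≤ M := le_of_lt (by simpa [Real.dist_eq] using hy)
    exact besselG'_term_bound n k y M hy' hM

lemma besselG'_continuous (n : ℕ) : Continuous (besselG' (n + 1)) := by
  have : Differentiable ℝ (besselG' (n + 1)) :=
    fun x => (hasDerivAt_besselG' n x).differentiableAt
  exact this.continuous

lemma besselG'_integral (R : ℝ) : ∀ p n : ℕ,
    (∫ r in (0:ℝ)..R, (r - R) ^ p * besselG' (n + 1) r) =
      (Nat.factorial p : ℝ) * (-1) ^ p * besselG' (n + p + 2) R := by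
  intro p
  induction p with
  | zero =>
    intro n
    simp only [pow_zero, one_mul, Nat.factorial_zero, Nat.cast_one]
    have := intervalIntegral.integral_eq_sub_of_hasDerivAt
      (f := besselG' (n + 2)) (f' := besselG' (n + 1)) (a := (0:ℝ)) (b := R)
      (fun x _ => hasDerivAt_besselG' (n + 1) x) ((besselG'_continuous n).intervalIntegrable 0 R)
    rw [this, besselG'_zero]
    ring_nf
  | succ p ih =>
    intro n
    have hparts := intervalIntegral.integral_mul_deriv_eq_deriv_mul
      (u := fun r => (r - R) ^ (p + 1)) (u' := fun r => (p + 1) * (r - R) ^ p)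
      (v := besselG' (n + 2)) (v' := besselG' (n + 1)) (a := (0:ℝ)) (b := R)
      (fun x _ => by
        simpa [Pi.pow_def] using ((hasDerivAt_id x).sub_const R).pow (p + 1))
      (fun x _ => hasDerivAt_besselG' (n + 1) x)
      (by apply Continuous.intervalIntegrable; continuity)
      ((besselG'_continuous n).intervalIntegrable 0 R)
    rw [hparts]
    simp only [sub_self, zero_pow (Nat.succ_ne_zero p), zero_mul, besselG'_zero, mul_zero,
      sub_zero, zero_sub]
    have : (∫ r in (0:ℝ)..R, (p + 1 : ℝ) * (r - R) ^ p * besselG' (n + 2) r) =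
        (p + 1 : ℝ) * ∫ r in (0:ℝ)..R, (r - R) ^ p * besselG' (n + 1 + 1) r := by
      rw [← intervalIntegral.integral_const_mul]
      congr 1; ext r; ring_nf
    rw [this, ih (n + 1)]
    have : n + 1 + p + 2 = n + (p + 1) + 2 := by ring
    rw [this, Nat.factorial_succ]
    push_cast
    ring

lemma besselG_eq (n : ℕ) (r : ℝ) (hr : 0 ≤ r) :
    (Real.sqrt r / (Real.sqrt 2 * π)) ^ n * besselJ n (2 * π * Real.sqrt (2 * r)) =
      besselG' n r := by
  unfold besselJ besselG'
  rw [← tsum_mul_left]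
  congr 1
  ext k
  have hs2 : Real.sqrt (2 * r) = Real.sqrt 2 * Real.sqrt r := Real.sqrt_mul (by norm_num) r
  have h2 : (Real.sqrt 2) ^ 2 = 2 := Real.sq_sqrt (by norm_num)
  have hr2 : (Real.sqrt r) ^ 2 = r := Real.sq_sqrt hr
  have hπ : π ≠ 0 := Real.pi_ne_zero
  have ht : Real.sqrt 2 ≠ 0 := by positivity
  have hfk : (Nat.factorial k : ℝ) ≠ 0 := by positivity
  have hfn : (Nat.factorial (k + n) : ℝ) ≠ 0 := by positivity
  rw [hs2]
  have harg : 2 * π * (Real.sqrt 2 * Real.sqrt r) / 2 = Real.sqrt 2 * π * Real.sqrt r := by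
    ring
  rw [harg]
  have hkey : (Real.sqrt 2 * π * Real.sqrt r) ^ (2 * k + n) =
      (2 * π ^ 2) ^ k * r ^ k * ((Real.sqrt 2 * π) ^ n * (Real.sqrt r) ^ n) := by
    rw [pow_add, pow_mul]
    have hsq : (Real.sqrt 2 * π * Real.sqrt r) ^ 2 = 2 * π ^ 2 * r := by
      rw [mul_pow, mul_pow, h2, hr2]
    rw [hsq, mul_pow, mul_pow]
    ring
  have hrn : Real.sqrt r ^ n * Real.sqrt r ^ n = r ^ n := by
    rw [← mul_pow, Real.mul_self_sqrt hr]
  rw [hkey, div_pow]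
  rw [show r ^ (k + n) = r ^ k * (Real.sqrt r ^ n * Real.sqrt r ^ n) by rw [hrn, pow_add]]
  field_simp

theorem stmt18 (p : ℕ) (hp : 1 ≤ p) (R : ℝ) (hR : 0 < R) :
    (∫ r in (0:ℝ)..R,
        (r - R) ^ (p - 1) * (Real.sqrt r / (Real.sqrt 2 * π)) *
          besselJ 1 (2 * π * Real.sqrt (2 * r))) =
      (Nat.factorial (p - 1) : ℝ) * (-Real.sqrt R / (Real.sqrt 2 * π)) ^ (p + 1) *
        besselJ (p + 1) (2 * π * Real.sqrt (2 * R)) := by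
  obtain ⟨q, rfl⟩ : ∃ q, p = q + 1 := ⟨p - 1, (Nat.succ_pred_eq_of_pos hp).symm⟩
  have hq1 : q + 1 - 1 = q := by omega
  rw [hq1, show q + 1 + 1 = q + 2 by omega]
  have hcongr : (∫ r in (0:ℝ)..R,
      (r - R) ^ q * (Real.sqrt r / (Real.sqrt 2 * π)) *
        besselJ 1 (2 * π * Real.sqrt (2 * r))) =
      ∫ r in (0:ℝ)..R, (r - R) ^ q * besselG' (0 + 1) r := by
    apply intervalIntegral.integral_congr
    intro r hrmem
    have hr0 : 0 ≤ r := by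
      rcases Set.mem_uIcc.mp hrmem with h | h
      · exact h.1
      · linarith [h.1, hR]
    have := besselG_eq 1 r hr0
    rw [pow_one] at this
    simp only [zero_add]
    rw [mul_assoc, this]
  rw [hcongr, besselG'_integral R q 0]
  have h0q2 : 0 + q + 2 = q + 2 := by ring
  rw [h0q2]
  have hRG := besselG_eq (q + 2) R hR.le
  have hneg : (-Real.sqrt R / (Real.sqrt 2 * π)) ^ (q + 1 + 1) =
      (-1 : ℝ) ^ (q + 2) * (Real.sqrt R / (Real.sqrt 2 * π)) ^ (q + 2) := by
    rw [neg_div, neg_pow]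
  rw [hneg, ← hRG]
  have : ((-1 : ℝ)) ^ (q + 2) = (-1 : ℝ) ^ q := by
    rw [pow_add]; norm_num
  rw [this]
  ring
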